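/- Let α > 0 and β₁, β₂ be real numbers with β₁ ≥ β₂ > 1. Then the Wilker-type inequality [𝔼_{α,β₂}(z)]^{(β₁−β₂)/(β₂−1)} + 𝔼_{α,β₂}(z)/𝔼_{α,β₁}(z) ≥ 2 holds for all real z ≥ 0, where the power is a real power of the positive number 𝔼_{α,β₂}(z). -/
import Mathlib

open Real Filter

/-- Gamma ratio lower bound from log-convexity. -/
lemma gamma_ratio_lb {x t : ℝ} (hx : 1 < x) (ht : 0 < t) :
    Real.Gamma x * (x - 1) ^ t ≤ Real.Gamma (x + t) := by
  have h0 : (0:ℝ) < x - 1 := by linarith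
  have hxm : (x - 1) ∈ Set.Ioi (0:ℝ) := h0
  have hx0 : (0:ℝ) < x := by linarith
  have hxt : x + t ∈ Set.Ioi (0:ℝ) := by simp only [Set.mem_Ioi]; linarith
  have hs := Real.convexOn_log_Gamma.slope_mono_adjacent hxm hxt
      (by linarith : x - 1 < x) (by linarith : x < x + t)
  simp only [Function.comp] at hs
  have hΓ1 : 0 < Real.Gamma (x - 1) := Real.Gamma_pos_of_pos h0
  have hΓx : 0 < Real.Gamma x := Real.Gamma_pos_of_pos hx0
  have hΓxt : 0 < Real.Gamma (x + t) := Real.Gamma_pos_of_pos (by linarith)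
  have hrec : Real.Gamma x = (x - 1) * Real.Gamma (x - 1) := by
    have := Real.Gamma_add_one (by linarith : x - 1 ≠ 0)
    rw [show x - 1 + 1 = x by ring] at this
    exact this
  have hlog : Real.log (Real.Gamma x) - Real.log (Real.Gamma (x - 1)) = Real.log (x - 1) := by
    rw [hrec, Real.log_mul (by linarith) (ne_of_gt hΓ1)]; ring
  rw [show x - (x - 1) = 1 by ring, show x + t - x = t by ring, div_one, hlog] at hs
  have key : Real.log (Real.Gamma x) + t * Real.log (x - 1) ≤ Real.log (Real.Gamma (x + t)) := by
    have := (le_div_iff₀ ht).mp hs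
    linarith
  calc Real.Gamma x * (x - 1) ^ t
      = Real.exp (Real.log (Real.Gamma x) + t * Real.log (x - 1)) := by
        rw [Real.exp_add, Real.exp_log hΓx, Real.rpow_def_of_pos h0, mul_comm t]
    _ ≤ Real.exp (Real.log (Real.Gamma (x + t))) := Real.exp_le_exp.mpr key
    _ = Real.Gamma (x + t) := Real.exp_log hΓxt

/-- Summability of the Mittag-Leffler series for nonneg z. -/
lemma summable_ml {α β z : ℝ} (hα : 0 < α) (hβ : 0 < β) (hz : 0 ≤ z) :
    Summable (fun n : ℕ => z ^ n / Real.Gamma (α * n + β)) := by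
  apply summable_of_ratio_norm_eventually_le (r := 1/2) (by norm_num)
  have t1 : Tendsto (fun n : ℕ => α * n + (β - 1)) atTop atTop :=
    tendsto_atTop_add_const_right atTop (β - 1) ((tendsto_natCast_atTop_atTop (R := ℝ)).const_mul_atTop hα)
  have t2 : Tendsto (fun n : ℕ => (α * n + (β - 1)) ^ α) atTop atTop :=
    (tendsto_rpow_atTop hα).comp t1
  filter_upwards [t2.eventually_ge_atTop (2 * z + 1), t1.eventually_ge_atTop 1] with n h1 h2
  set x : ℝ := α * n + β with hxdef
  have hx2 : 2 ≤ x := by rw [hxdef]; linarith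
  have hx1 : 1 < x := by linarith
  have hΓx : 0 < Real.Gamma x := Real.Gamma_pos_of_pos (by linarith)
  have hΓxa : 0 < Real.Gamma (x + α) := Real.Gamma_pos_of_pos (by linarith)
  have hcast : α * ((n : ℝ) + 1) + β = x + α := by rw [hxdef]; ring
  have hxm1 : x - 1 = α * n + (β - 1) := by rw [hxdef]; ring
  have hkey : Real.Gamma x * (2 * z + 1) ≤ Real.Gamma (x + α) := by
    calc Real.Gamma x * (2 * z + 1) ≤ Real.Gamma x * (x - 1) ^ α := by
          rw [hxm1]; nlinarith [h1, hΓx]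
      _ ≤ Real.Gamma (x + α) := gamma_ratio_lb hx1 hα
  have hzn : (0:ℝ) ≤ z ^ n := pow_nonneg hz n
  have e1 : (α * ((n:ℕ)+1 : ℕ) + β : ℝ) = x + α := by push_cast; rw [hxdef]; ring
  rw [Real.norm_eq_abs, Real.norm_eq_abs, e1,
    abs_of_nonneg (div_nonneg (pow_nonneg hz _) hΓxa.le),
    abs_of_nonneg (div_nonneg hzn hΓx.le), pow_succ]
  calc z ^ n * z / Real.Gamma (x + α)
      ≤ z ^ n * z / (Real.Gamma x * (2 * z + 1)) := by
        gcongr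
    _ = z ^ n / Real.Gamma x * (z / (2 * z + 1)) := by
        field_simp
    _ ≤ z ^ n / Real.Gamma x * (1/2) := by
        apply mul_le_mul_of_nonneg_left _ (div_nonneg hzn hΓx.le)
        rw [div_le_iff₀ (by linarith)]; linarith
    _ = 1/2 * (z ^ n / Real.Gamma x) := by ring

/-- Key Gamma comparison from log-convexity: for 0 < β₂ ≤ β₁ and 0 ≤ t,
`Γ β₁ * Γ(β₂+t) ≤ Γ β₂ * Γ(β₁+t)`. -/
lemma gamma_cross {β₁ β₂ t : ℝ} (h2 : 0 < β₂) (h12 : β₂ ≤ β₁) (ht : 0 ≤ t) :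
    Real.Gamma β₁ * Real.Gamma (β₂ + t) ≤ Real.Gamma β₂ * Real.Gamma (β₁ + t) := by
  rcases eq_or_lt_of_le ht with rfl | ht
  · simp [mul_comm]
  rcases eq_or_lt_of_le h12 with rfl | h12
  · exact le_refl _
  have h1 : 0 < β₁ := lt_trans h2 h12
  set f : ℝ → ℝ := Real.log ∘ Real.Gamma with hf
  have hm2 : β₂ ∈ Set.Ioi (0:ℝ) := h2
  have hm1 : β₁ ∈ Set.Ioi (0:ℝ) := h1
  have hm2t : β₂ + t ∈ Set.Ioi (0:ℝ) := by simp only [Set.mem_Ioi]; linarith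
  have hm1t : β₁ + t ∈ Set.Ioi (0:ℝ) := by simp only [Set.mem_Ioi]; linarith
  have s1 : (f (β₂ + t) - f β₂) / (β₂ + t - β₂) ≤ (f (β₁ + t) - f β₂) / (β₁ + t - β₂) :=
    Real.convexOn_log_Gamma.secant_mono hm2 hm2t hm1t (by intro h; nlinarith [h]; )
      (by intro h; nlinarith [h]) (by linarith)
  have s2 : (f β₂ - f (β₁ + t)) / (β₂ - (β₁ + t)) ≤ (f β₁ - f (β₁ + t)) / (β₁ - (β₁ + t)) :=
    Real.convexOn_log_Gamma.secant_mono hm1t hm2 hm1 (by intro h; nlinarith [h])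
      (by intro h; nlinarith [h]) (by linarith)
  have s2' : (f (β₁ + t) - f β₂) / (β₁ + t - β₂) ≤ (f (β₁ + t) - f β₁) / t := by
    have e1 : (f β₂ - f (β₁ + t)) / (β₂ - (β₁ + t)) = (f (β₁ + t) - f β₂) / (β₁ + t - β₂) := by
      rw [← neg_div_neg_eq]; ring_nf
    have e2 : (f β₁ - f (β₁ + t)) / (β₁ - (β₁ + t)) = (f (β₁ + t) - f β₁) / t := by
      rw [← neg_div_neg_eq]; ring_nf
    rw [e1, e2] at s2; exact s2
  have s1' : (f (β₂ + t) - f β₂) / t ≤ (f (β₁ + t) - f β₁) / t := by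
    rw [show β₂ + t - β₂ = t by ring] at s1
    exact le_trans s1 s2'
  have key : f (β₂ + t) + f β₁ ≤ f (β₁ + t) + f β₂ := by
    have := (div_le_div_iff_of_pos_right ht).mp s1'
    linarith
  have hΓ1 := Real.Gamma_pos_of_pos h1
  have hΓ2 := Real.Gamma_pos_of_pos h2
  have hΓ1t := Real.Gamma_pos_of_pos (show (0:ℝ) < β₁ + t by linarith)
  have hΓ2t := Real.Gamma_pos_of_pos (show (0:ℝ) < β₂ + t by linarith)
  calc Real.Gamma β₁ * Real.Gamma (β₂ + t)
      = Real.exp (f (β₂ + t) + f β₁) := by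
        simp only [hf, Function.comp, Real.exp_add, Real.exp_log hΓ1, Real.exp_log hΓ2t]
        ring
    _ ≤ Real.exp (f (β₁ + t) + f β₂) := Real.exp_le_exp.mpr key
    _ = Real.Gamma β₂ * Real.Gamma (β₁ + t) := by
        simp only [hf, Function.comp, Real.exp_add, Real.exp_log hΓ2, Real.exp_log hΓ1t]
        ring

/-- The Mittag-Leffler function `E_{α,β}(z) = ∑_{n=0}^∞ z^n / Γ(α n + β)`. -/
noncomputable def mittagLeffler (α β z : ℝ) : ℝ :=
  ∑' n : ℕ, z ^ n / Real.Gamma (α * n + β)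

/-- The normalized Mittag-Leffler function `𝔼_{α,β}(z) = Γ(β) E_{α,β}(z)`. -/
noncomputable def mittagLefflerNorm (α β z : ℝ) : ℝ :=
  Real.Gamma β * mittagLeffler α β z

lemma one_le_mlNorm {α β z : ℝ} (hα : 0 < α) (hβ : 0 < β) (hz : 0 ≤ z) :
    1 ≤ mittagLefflerNorm α β z := by
  have hΓ := Real.Gamma_pos_of_pos hβ
  have hsum := summable_ml hα hβ hz (z := z)
  have h0 : (1 : ℝ) / Real.Gamma β ≤ mittagLeffler α β z := by
    have := Summable.le_tsum hsum 0 (fun j _ => div_nonneg (pow_nonneg hz j)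
      (Real.Gamma_pos_of_pos (by positivity : (0:ℝ) < α * j + β)).le)
    simpa [mittagLeffler] using this
  have := mul_le_mul_of_nonneg_left h0 hΓ.le
  rw [mul_one_div, div_self (ne_of_gt hΓ)] at this
  exact this.trans_eq rfl

lemma mlNorm_anti {α β₁ β₂ z : ℝ} (hα : 0 < α) (h2 : 0 < β₂) (h12 : β₂ ≤ β₁) (hz : 0 ≤ z) :
    mittagLefflerNorm α β₁ z ≤ mittagLefflerNorm α β₂ z := by
  have h1 : 0 < β₁ := lt_of_lt_of_le h2 h12
  have hΓ1 := Real.Gamma_pos_of_pos h1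
  have hΓ2 := Real.Gamma_pos_of_pos h2
  have hs1 := summable_ml hα h1 hz (z := z)
  have hs2 := summable_ml hα h2 hz (z := z)
  unfold mittagLefflerNorm mittagLeffler
  rw [← tsum_mul_left, ← tsum_mul_left]
  refine Summable.tsum_le_tsum (fun n => ?_) (hs1.mul_left _) (hs2.mul_left _)
  have hΓn1 := Real.Gamma_pos_of_pos (show (0:ℝ) < α * n + β₁ by positivity)
  have hΓn2 := Real.Gamma_pos_of_pos (show (0:ℝ) < α * n + β₂ by positivity)
  have hcross := gamma_cross h2 h12 (show (0:ℝ) ≤ α * n by positivity)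
  rw [show β₂ + α * n = α * n + β₂ by ring, show β₁ + α * n = α * n + β₁ by ring] at hcross
  have hzn : (0:ℝ) ≤ z ^ n := pow_nonneg hz n
  rw [mul_div_assoc', mul_div_assoc', div_le_div_iff₀ hΓn1 hΓn2]
  nlinarith [hcross, hzn]

/-- Wilker-type inequality for normalized Mittag-Leffler functions. -/
theorem mittagLefflerNorm_wilker (α β₁ β₂ : ℝ) (hα : 0 < α)
    (hβ₂ : 1 < β₂) (hβ : β₂ ≤ β₁) :
    ∀ z : ℝ, 0 ≤ z →
      (mittagLefflerNorm α β₂ z) ^ ((β₁ - β₂) / (β₂ - 1)) +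
          mittagLefflerNorm α β₂ z / mittagLefflerNorm α β₁ z ≥ 2 := by
  intro z hz
  have h2 : (0:ℝ) < β₂ := by linarith
  have h1 : (0:ℝ) < β₁ := by linarith
  have hA : 1 ≤ mittagLefflerNorm α β₂ z := one_le_mlNorm hα h2 hz
  have hB : 1 ≤ mittagLefflerNorm α β₁ z := one_le_mlNorm hα h1 hz
  have hBA : mittagLefflerNorm α β₁ z ≤ mittagLefflerNorm α β₂ z := mlNorm_anti hα h2 hβ hz
  have hp : 0 ≤ (β₁ - β₂) / (β₂ - 1) := div_nonneg (by linarith) (by linarith)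
  have h1pow : 1 ≤ (mittagLefflerNorm α β₂ z) ^ ((β₁ - β₂) / (β₂ - 1)) :=
    Real.one_le_rpow hA hp
  have hdiv : 1 ≤ mittagLefflerNorm α β₂ z / mittagLefflerNorm α β₁ z :=
    (one_le_div (by linarith)).mpr hBA
  linarith
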